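/- Let G be a loopless multigraph with vertex set V and edge-index set E, let R ⊆ E (the red edges), let b : V → ℕ satisfy b(v) ≤ deg(v) for every vertex v, where deg(v) is the number of edges having v as an endpoint, and let k ∈ ℕ. For each vertex v fix a bijection σ_v from the edges incident with v to {1, …, deg(v)}. Define a finite simple graph G′: its vertices are, for each v ∈ V, the vertices (v, 1), …, (v, deg(v)) together with deg(v) − b(v) padding vertices p_{v,1}, …, p_{v, deg(v)−b(v)}; its edges are, for each v ∈ V, all edges {p_{v,s}, (v, i)} with 1 ≤ s ≤ deg(v) − b(v) and 1 ≤ i ≤ deg(v) (these edges are not red), and, for each e ∈ E with endpoints v and w, the edge {(v, σ_v(e)), (w, σ_w(e))}, which is red if and only if e ∈ R. Then G has a perfect b-matching containing exactly k red edges if and only if G′ has a perfect matching containing exactly k red edges. -/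
import Mathlib


attribute [local instance] Classical.propDecidable

/-- The degree of vertex `v` in the loopless multigraph with edge-endpoint map `ends`:
the number of edges having `v` as an endpoint. -/
def mdeg {VT ET : Type} [Fintype ET] [DecidableEq VT] (ends : ET → Sym2 VT) (v : VT) : ℕ :=
  (Finset.univ.filter (fun e => v ∈ ends e)).card

/-- Vertex set of `G′`: for each `v`, the vertices `(v,1), …, (v,deg v)` (left summand)
and the padding vertices `p_{v,1}, …, p_{v, deg v − b v}` (right summand). -/
abbrev GVert {VT ET : Type} [Fintype ET] [DecidableEq VT] (ends : ET → Sym2 VT)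
    (b : VT → ℕ) : Type :=
  (Σ v : VT, Fin (mdeg ends v)) ⊕ (Σ v : VT, Fin (mdeg ends v - b v))

/-- Edge set of `G′`: for each edge `e` of `G` the edge `{(v, σ_v e), (w, σ_w e)}` where
`v, w` are the endpoints of `e` (left summand, red iff `e ∈ R`), and for each `v` all
edges `{p_{v,s}, (v,i)}` (right summand, never red). -/
abbrev GEdge {VT ET : Type} [Fintype ET] [DecidableEq VT] (ends : ET → Sym2 VT)
    (b : VT → ℕ) : Type :=
  ET ⊕ (Σ v : VT, Fin (mdeg ends v - b v) × Fin (mdeg ends v))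

/-- The incidence relation of `G′`: vertex `(v,i)` is incident with the edge coming from
`e ∈ E(G)` iff `v` is an endpoint of `e` and `σ_v e = i`; vertex `(v,i)` is incident with
the padding edge `{p_{w,s}, (w,j)}` iff `v = w` and `i = j`; and padding vertex `p_{v,s}`
is incident with it iff `v = w` and `s` is its index. -/
def ginc {VT ET : Type} [Fintype ET] [DecidableEq VT] (ends : ET → Sym2 VT) (b : VT → ℕ)
    (σ : (v : VT) → {e : ET // v ∈ ends e} ≃ Fin (mdeg ends v)) :
    GVert ends b → GEdge ends b → Prop
  | Sum.inl ⟨v, i⟩, Sum.inl e => ∃ h : v ∈ ends e, σ v ⟨e, h⟩ = i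
  | Sum.inl x, Sum.inr ⟨w, (_, j)⟩ => x = ⟨w, j⟩
  | Sum.inr _, Sum.inl _ => False
  | Sum.inr x, Sum.inr ⟨w, (s, _)⟩ => x = ⟨w, s⟩

/-- the loopless multigraph `G` has a perfect `b`-matching with exactly `k`
red edges iff the simple graph `G′` obtained by Tutte's gadget construction has a perfect
matching with exactly `k` red edges. -/
private lemma filter_card_one {α : Type*} [DecidableEq α] {s : Finset α} {p : α → Prop}
    [DecidablePred p] {x : α} (hx : x ∈ s) (hpx : p x)
    (huniq : ∀ y ∈ s, p y → y = x) : (s.filter p).card = 1 := by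
  rw [Finset.card_eq_one]
  refine ⟨x, Finset.ext fun y => ?_⟩
  simp only [Finset.mem_filter, Finset.mem_singleton]
  exact ⟨fun ⟨h1, h2⟩ => huniq y h1 h2, fun h => h ▸ ⟨hx, hpx⟩⟩

private lemma of_filter_card_one {α : Type*} {s : Finset α} {p : α → Prop}
    [DecidablePred p] (h : (s.filter p).card = 1) :
    (∃ x ∈ s, p x) ∧ ∀ x ∈ s, p x → ∀ y ∈ s, p y → x = y := by
  obtain ⟨a, ha⟩ := Finset.card_eq_one.1 h
  have hm : ∀ x, x ∈ s ∧ p x ↔ x = a := by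
    intro x
    rw [← Finset.mem_filter, ha, Finset.mem_singleton]
  have haa := (hm a).2 rfl
  exact ⟨⟨a, haa.1, haa.2⟩, fun x hx hpx y hy hpy =>
    ((hm x).1 ⟨hx, hpx⟩).trans ((hm y).1 ⟨hy, hpy⟩).symm⟩

theorem stmt6 {VT ET : Type} [Fintype VT] [DecidableEq VT] [Fintype ET] [DecidableEq ET]
    (ends : ET → Sym2 VT) (hloop : ∀ e : ET, ¬ (ends e).IsDiag)
    (R : Finset ET) (b : VT → ℕ) (hb : ∀ v : VT, b v ≤ mdeg ends v)
    (σ : (v : VT) → {e : ET // v ∈ ends e} ≃ Fin (mdeg ends v)) (k : ℕ) :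
    (∃ S : Finset ET,
        (∀ v : VT, (S.filter (fun e => v ∈ ends e)).card = b v) ∧
        (S ∩ R).card = k)
    ↔ (∃ M : Finset (GEdge ends b),
        (∀ u : GVert ends b, (M.filter (fun e => ginc ends b σ u e)).card = 1) ∧
        (M.filter (fun e => Sum.elim (fun e' => e' ∈ R) (fun _ => False) e)).card = k) := by
  have key : ∀ (S : Finset ET) (v : VT),
      (S.filter (fun e => v ∈ ends e)).card =
      (Finset.univ.filter
        (fun i : Fin (mdeg ends v) => (((σ v).symm i : {e : ET // v ∈ ends e}) : ET) ∈ S)).card := by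
    intro S v
    refine Finset.card_bij' (fun e he => σ v ⟨e, (Finset.mem_filter.1 he).2⟩)
      (fun i _ => (((σ v).symm i : {e : ET // v ∈ ends e}) : ET)) ?_ ?_ ?_ ?_
    · intro e he
      simp only [Finset.mem_filter, Finset.mem_univ, true_and, Equiv.symm_apply_apply]
      exact (Finset.mem_filter.1 he).1
    · intro i hi
      exact Finset.mem_filter.2 ⟨(Finset.mem_filter.1 hi).2, ((σ v).symm i).2⟩
    · intro e he; simp
    · intro i hi; simp
  have redcount : ∀ (M : Finset (GEdge ends b)) (S : Finset ET),
      (∀ e : ET, (Sum.inl e : GEdge ends b) ∈ M ↔ e ∈ S) →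
      (M.filter (fun e => Sum.elim (fun e' => e' ∈ R) (fun _ => False) e)).card
        = (S ∩ R).card := by
    intro M S h
    have himg : ((S ∩ R).image (Sum.inl : ET → GEdge ends b)).card = (S ∩ R).card :=
      Finset.card_image_of_injective _ Sum.inl_injective
    rw [← himg]
    congr 1
    ext y
    cases y with
    | inl e =>
      simp only [Finset.mem_filter, Finset.mem_image, Finset.mem_inter, Sum.elim_inl, h e]
      constructor
      · rintro ⟨h1, h2⟩; exact ⟨e, ⟨h1, h2⟩, rfl⟩
      · rintro ⟨e', ⟨h1, h2⟩, he⟩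
        obtain rfl := Sum.inl_injective he
        exact ⟨h1, h2⟩
    | inr p =>
      simp only [Finset.mem_filter, Finset.mem_image, Sum.elim_inr]
      simp
  constructor
  · -- forward
    rintro ⟨S, hS, hSR⟩
    set A : ∀ v : VT, Finset (Fin (mdeg ends v)) := fun v =>
      Finset.univ.filter
        (fun i => (((σ v).symm i : {e : ET // v ∈ ends e}) : ET) ∉ S) with hA_def
    have hAcard : ∀ v, (A v).card = mdeg ends v - b v := by
      intro v
      have h1 := Finset.card_filter_add_card_filter_not
        (s := (Finset.univ : Finset (Fin (mdeg ends v))))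
        (p := fun i => (((σ v).symm i : {e : ET // v ∈ ends e}) : ET) ∈ S)
      have h2 := (key S v).symm
      rw [hS v] at h2
      have h3 : (Finset.univ : Finset (Fin (mdeg ends v))).card = mdeg ends v := by simp
      have h4 : (A v).card =
          (Finset.univ.filter (fun i : Fin (mdeg ends v) =>
            ¬ ((((σ v).symm i : {e : ET // v ∈ ends e}) : ET) ∈ S))).card := rfl
      omega
    have τ : ∀ v : VT, Fin (mdeg ends v - b v) ≃ {x // x ∈ A v} := fun v =>
      ((A v).equivFin.trans (finCongr (hAcard v))).symm
    have hτ : ∀ (v : VT) (s : Fin (mdeg ends v - b v)),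
        (((σ v).symm ((τ v s : {x // x ∈ A v}) : Fin (mdeg ends v)) :
          {e : ET // v ∈ ends e}) : ET) ∉ S :=
      fun v s => (Finset.mem_filter.1 (τ v s).2).2
    set M : Finset (GEdge ends b) :=
      S.image Sum.inl ∪
      Finset.univ.image (fun p : Σ v : VT, Fin (mdeg ends v - b v) =>
        (Sum.inr ⟨p.1, (p.2, ((τ p.1 p.2 : {x // x ∈ A p.1}) : Fin (mdeg ends p.1)))⟩ :
          GEdge ends b)) with hM_def
    have hMl : ∀ e : ET, (Sum.inl e : GEdge ends b) ∈ M ↔ e ∈ S := by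
      intro e
      simp [hM_def]
    have hMr : ∀ (v : VT) (s : Fin (mdeg ends v - b v)) (j : Fin (mdeg ends v)),
        (Sum.inr ⟨v, (s, j)⟩ : GEdge ends b) ∈ M ↔
          ((τ v s : {x // x ∈ A v}) : Fin (mdeg ends v)) = j := by
      intro v s j
      simp only [hM_def, Finset.mem_union, Finset.mem_image, Finset.mem_univ, true_and]
      constructor
      · rintro (⟨e, _, he⟩ | ⟨⟨w, s'⟩, he⟩)
        · exact absurd he (by simp)
        · rw [Sum.inr.injEq, Sigma.mk.inj_iff] at he
          obtain ⟨rfl, he⟩ := he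
          rw [heq_eq_eq, Prod.mk.injEq] at he
          obtain ⟨rfl, he⟩ := he
          exact he
      · intro h
        exact Or.inr ⟨⟨v, s⟩, by rw [h]⟩
    refine ⟨M, ?_, ?_⟩
    · intro u
      match u with
      | Sum.inl ⟨v, i⟩ =>
        by_cases hi : (((σ v).symm i : {e : ET // v ∈ ends e}) : ET) ∈ S
        · refine filter_card_one (x := Sum.inl (((σ v).symm i : {e : ET // v ∈ ends e}) : ET))
            ((hMl _).2 hi) ⟨((σ v).symm i).2, by simp⟩ ?_
          rintro (e | ⟨w, s, j⟩) hy hgy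
          · obtain ⟨h, hσ⟩ := hgy
            have he : (⟨e, h⟩ : {e : ET // v ∈ ends e}) = (σ v).symm i := by
              rw [← hσ, Equiv.symm_apply_apply]
            rw [Sum.inl.injEq, ← he]
          · exfalso
            rw [show ginc ends b σ (Sum.inl ⟨v, i⟩) (Sum.inr ⟨w, (s, j)⟩) =
                ((⟨v, i⟩ : Σ v, Fin (mdeg ends v)) = ⟨w, j⟩) from rfl,
              Sigma.mk.inj_iff] at hgy
            obtain ⟨rfl, hji⟩ := hgy
            rw [heq_eq_eq] at hji
            subst hji
            have := (hMr v s i).1 hy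
            exact hτ v s (by rw [this]; exact hi)
        · have memA : i ∈ A v := Finset.mem_filter.2 ⟨Finset.mem_univ _, hi⟩
          set s₀ := (τ v).symm ⟨i, memA⟩ with hs₀
          have hτs₀ : ((τ v s₀ : {x // x ∈ A v}) : Fin (mdeg ends v)) = i := by
            rw [hs₀, Equiv.apply_symm_apply]
          refine filter_card_one (x := Sum.inr ⟨v, (s₀, i)⟩)
            ((hMr v s₀ i).2 hτs₀) rfl ?_
          rintro (e | ⟨w, s, j⟩) hy hgy
          · exfalso
            obtain ⟨h, hσ⟩ := hgy
            have he : (⟨e, h⟩ : {e : ET // v ∈ ends e}) = (σ v).symm i := by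
              rw [← hσ, Equiv.symm_apply_apply]
            apply hi
            rw [← he]
            exact (hMl e).1 hy
          · rw [show ginc ends b σ (Sum.inl ⟨v, i⟩) (Sum.inr ⟨w, (s, j)⟩) =
                ((⟨v, i⟩ : Σ v, Fin (mdeg ends v)) = ⟨w, j⟩) from rfl,
              Sigma.mk.inj_iff] at hgy
            obtain ⟨rfl, hji⟩ := hgy
            rw [heq_eq_eq] at hji
            subst hji
            have hmem := (hMr v s i).1 hy
            have h5 : τ v s = ⟨i, memA⟩ := Subtype.ext hmem
            have h6 : s = s₀ := by rw [hs₀, ← h5, Equiv.symm_apply_apply]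
            rw [h6]
      | Sum.inr ⟨v, s⟩ =>
        refine filter_card_one
          (x := Sum.inr ⟨v, (s, ((τ v s : {x // x ∈ A v}) : Fin (mdeg ends v)))⟩)
          ((hMr v s _).2 rfl) rfl ?_
        rintro (e | ⟨w, s', j⟩) hy hgy
        · exact hgy.elim
        · rw [show ginc ends b σ (Sum.inr ⟨v, s⟩) (Sum.inr ⟨w, (s', j)⟩) =
              ((⟨v, s⟩ : Σ v, Fin (mdeg ends v - b v)) = ⟨w, s'⟩) from rfl,
            Sigma.mk.inj_iff] at hgy
          obtain ⟨rfl, hs'⟩ := hgy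
          rw [heq_eq_eq] at hs'
          subst hs'
          have := (hMr v s j).1 hy
          rw [Sum.inr.injEq, Sigma.mk.inj_iff]
          exact ⟨rfl, by rw [heq_eq_eq, Prod.mk.injEq]; exact ⟨rfl, this.symm⟩⟩
    · rw [redcount M S hMl]
      exact hSR
  · -- backward
    rintro ⟨M, hM, hMk⟩
    set S : Finset ET := Finset.univ.filter (fun e => (Sum.inl e : GEdge ends b) ∈ M)
      with hS_def
    have hSmem : ∀ e : ET, e ∈ S ↔ (Sum.inl e : GEdge ends b) ∈ M := by
      intro e; simp [hS_def]
    have hex : ∀ u : GVert ends b, ∃ x ∈ M, ginc ends b σ u x :=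
      fun u => (of_filter_card_one (hM u)).1
    have huniq : ∀ u : GVert ends b, ∀ x ∈ M, ginc ends b σ u x →
        ∀ y ∈ M, ginc ends b σ u y → x = y :=
      fun u => (of_filter_card_one (hM u)).2
    refine ⟨S, ?_, ?_⟩
    · intro v
      have hpad : ∀ s : Fin (mdeg ends v - b v),
          ∃ j : Fin (mdeg ends v), (Sum.inr ⟨v, (s, j)⟩ : GEdge ends b) ∈ M := by
        intro s
        obtain ⟨x, hx, hgx⟩ := hex (Sum.inr ⟨v, s⟩)
        match x with
        | Sum.inl e => exact hgx.elim
        | Sum.inr ⟨w, (s', j)⟩ =>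
          rw [show ginc ends b σ (Sum.inr ⟨v, s⟩) (Sum.inr ⟨w, (s', j)⟩) =
              ((⟨v, s⟩ : Σ v, Fin (mdeg ends v - b v)) = ⟨w, s'⟩) from rfl,
            Sigma.mk.inj_iff] at hgx
          obtain ⟨rfl, hs'⟩ := hgx
          rw [heq_eq_eq] at hs'
          subst hs'
          exact ⟨j, hx⟩
      -- the matching function of padding vertices
      set f : Fin (mdeg ends v - b v) → Fin (mdeg ends v) :=
        fun s => Classical.choose (hpad s) with hf_def
      have hf : ∀ s, (Sum.inr ⟨v, (s, f s)⟩ : GEdge ends b) ∈ M :=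
        fun s => Classical.choose_spec (hpad s)
      set P : Finset (Fin (mdeg ends v)) := Finset.univ.filter
        (fun i => ∃ s : Fin (mdeg ends v - b v),
          (Sum.inr ⟨v, (s, i)⟩ : GEdge ends b) ∈ M) with hP_def
      set Q : Finset (Fin (mdeg ends v)) := Finset.univ.filter
        (fun i => (((σ v).symm i : {e : ET // v ∈ ends e}) : ET) ∈ S) with hQ_def
      have hQ' : ∀ i : Fin (mdeg ends v), i ∈ Q ↔
          (Sum.inl (((σ v).symm i : {e : ET // v ∈ ends e}) : ET) : GEdge ends b) ∈ M := by
        intro i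
        rw [hQ_def]
        simp only [Finset.mem_filter, Finset.mem_univ, true_and]
        exact hSmem _
      have hPQ : ∀ i : Fin (mdeg ends v), i ∈ P ↔ i ∉ Q := by
        intro i
        constructor
        · rintro hiP hiQ
          obtain ⟨s, hs⟩ := (Finset.mem_filter.1 hiP).2
          have h1 : ginc ends b σ (Sum.inl ⟨v, i⟩) (Sum.inr ⟨v, (s, i)⟩) := rfl
          have h2 : ginc ends b σ (Sum.inl ⟨v, i⟩)
              (Sum.inl (((σ v).symm i : {e : ET // v ∈ ends e}) : ET)) :=
            ⟨((σ v).symm i).2, by simp⟩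
          have := huniq (Sum.inl ⟨v, i⟩) _ hs h1 _ ((hQ' i).1 hiQ) h2
          simp at this
        · intro hiQ
          obtain ⟨x, hx, hgx⟩ := hex (Sum.inl ⟨v, i⟩)
          match x with
          | Sum.inl e =>
            exfalso
            obtain ⟨h, hσ⟩ := hgx
            have he : (⟨e, h⟩ : {e : ET // v ∈ ends e}) = (σ v).symm i := by
              rw [← hσ, Equiv.symm_apply_apply]
            have hm : (Sum.inl (((σ v).symm i : {e : ET // v ∈ ends e}) : ET) :
                GEdge ends b) ∈ M := by
              rw [← he]; exact hx
            exact hiQ ((hQ' i).2 hm)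
          | Sum.inr ⟨w, (s, j)⟩ =>
            rw [show ginc ends b σ (Sum.inl ⟨v, i⟩) (Sum.inr ⟨w, (s, j)⟩) =
                ((⟨v, i⟩ : Σ v, Fin (mdeg ends v)) = ⟨w, j⟩) from rfl,
              Sigma.mk.inj_iff] at hgx
            obtain ⟨rfl, hji⟩ := hgx
            rw [heq_eq_eq] at hji
            subst hji
            exact Finset.mem_filter.2 ⟨Finset.mem_univ _, ⟨s, hx⟩⟩
      have hPcard : P.card = mdeg ends v - b v := by
        have hc := Finset.card_nbij (s := (Finset.univ : Finset (Fin (mdeg ends v - b v))))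
          (t := P) (i := f) ?_ ?_ ?_
        · rw [← hc]; simp
        · intro s _
          exact Finset.mem_filter.2 ⟨Finset.mem_univ _, ⟨s, hf s⟩⟩
        · intro s₁ _ s₂ _ hss
          have h1 := hf s₁
          have h2 := hf s₂
          rw [hss] at h1
          have := huniq (Sum.inl ⟨v, f s₂⟩) _ h1 rfl _ h2 rfl
          rw [Sum.inr.injEq, Sigma.mk.inj_iff] at this
          obtain ⟨-, hp⟩ := this
          rw [heq_eq_eq, Prod.mk.injEq] at hp
          exact hp.1
        · intro i hi
          obtain ⟨s, hs⟩ := (Finset.mem_filter.1 (Finset.mem_coe.1 hi)).2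
          refine ⟨s, Finset.mem_coe.2 (Finset.mem_univ _), ?_⟩
          have h1 := hf s
          have := huniq (Sum.inr ⟨v, s⟩) _ h1 rfl _ hs rfl
          rw [Sum.inr.injEq, Sigma.mk.inj_iff] at this
          obtain ⟨-, hp⟩ := this
          rw [heq_eq_eq, Prod.mk.injEq] at hp
          exact hp.2
      have hsum : Q.card + P.card = mdeg ends v := by
        have h1 := Finset.card_filter_add_card_filter_not
          (s := (Finset.univ : Finset (Fin (mdeg ends v))))
          (p := fun i => (((σ v).symm i : {e : ET // v ∈ ends e}) : ET) ∈ S)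
        have h2 : P = Finset.univ.filter (fun i : Fin (mdeg ends v) =>
            ¬ ((((σ v).symm i : {e : ET // v ∈ ends e}) : ET) ∈ S)) := by
          ext i
          rw [hPQ i, hQ_def]
          simp only [Finset.mem_filter, Finset.mem_univ, true_and]
        have h3 : (Finset.univ : Finset (Fin (mdeg ends v))).card = mdeg ends v := by simp
        have h4 : Q.card = (Finset.univ.filter (fun i : Fin (mdeg ends v) =>
            (((σ v).symm i : {e : ET // v ∈ ends e}) : ET) ∈ S)).card := rfl
        rw [h2, h4]
        omega
      rw [key S v]
      show Q.card = b v
      have := hb v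
      omega
    · rw [redcount M S (fun e => (hSmem e).symm)] at hMk
      exact hMk
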